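/- arXiv:2504.06582 — 2 statements merged into one kernel-verified Lean document; each statement's English description precedes it below -/
import Mathlib

section
/- Let F be the 4×4 matrix with (1,1) entry βν/(σ+ν) and all other entries zero, and let V be the 4×4 lower-triangular-style matrix with diagonal entries j₁, j₂, j₃, j₄ (all positive), first column (j₁, -γ₁, -γ₂, -γ₃)ᵀ, entry (2,4) = φ₃, and all other off-diagonal entries zero. Then V is invertible and the spectral radius of F·V⁻¹ equals βν/((σ+ν)j₁). -/
open Matrix

theorem stmt_7 (β σ ν γ₁ γ₂ γ₃ φ₃ j₁ j₂ j₃ j₄ : ℝ)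
    (hβ : 0 ≤ β) (hσ : 0 ≤ σ) (hν : 0 ≤ ν) (hσν : 0 < σ + ν)
    (hj₁ : 0 < j₁) (hj₂ : 0 < j₂) (hj₃ : 0 < j₃) (hj₄ : 0 < j₄)
    (F V : Matrix (Fin 4) (Fin 4) ℝ)
    (hF : F = !![β * ν / (σ + ν), 0, 0, 0; 0, 0, 0, 0; 0, 0, 0, 0; 0, 0, 0, 0])
    (hV : V = !![j₁, 0, 0, 0; -γ₁, j₂, 0, φ₃; -γ₂, 0, j₃, 0; -γ₃, 0, 0, j₄]) :
    IsUnit V ∧ spectralRadius ℝ (F * V⁻¹) = ENNReal.ofReal (β * ν / ((σ + ν) * j₁)) := by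
  set c : ℝ := β * ν / ((σ + ν) * j₁) with hc
  have hc0 : 0 ≤ c := by positivity
  have hdet : V.det = j₁ * (j₂ * (j₃ * j₄)) := by
    rw [hV]
    simp [Matrix.det_succ_row_zero, Fin.sum_univ_succ, Matrix.det_fin_three]
  have hdet' : IsUnit V.det := by
    rw [hdet]
    exact (by positivity : (0:ℝ) < j₁ * (j₂ * (j₃ * j₄))).ne'.isUnit
  have hUnit : IsUnit V := (Matrix.isUnit_iff_isUnit_det V).2 hdet'
  have hD : F = Matrix.diagonal ![c, 0, 0, 0] * V := by
    rw [hF, hV]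
    have h1 : c * j₁ = β * ν / (σ + ν) := by
      field_simp [hc]
      rw [hc]; field_simp
    funext i j
    fin_cases i <;> fin_cases j <;>
      simp [Matrix.mul_apply, Fin.sum_univ_four, Matrix.diagonal, h1, Matrix.vecHead, Matrix.vecTail]
  have hFV : F * V⁻¹ = Matrix.diagonal ![c, 0, 0, 0] := by
    rw [hD, Matrix.mul_assoc, Matrix.mul_nonsing_inv _ hdet', Matrix.mul_one]
  refine ⟨hUnit, ?_⟩
  rw [hFV]
  rw [spectralRadius, spectrum_diagonal, iSup_range]
  apply le_antisymm
  · apply iSup_le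
    intro i
    fin_cases i <;> simp [← enorm_eq_nnnorm, Real.enorm_eq_ofReal_abs, abs_of_nonneg hc0]
  · have := le_iSup (fun i : Fin 4 => (‖![c, 0, 0, 0] i‖₊ : ENNReal)) 0
    simpa [← enorm_eq_nnnorm, Real.enorm_eq_ofReal_abs, abs_of_nonneg hc0] using this
end

section
/- For the Caputo positivity bound: if a function satisfies the scalar fractional inequality giving the Laplace-transform bound ℒ[S_p](s) ≥ s^{α-1}/(s^α + K)·S_p(0) with K ≥ 0 and α ∈ (0,1), then the inverse transform yields S_p(t) ≥ S_p(0)·E_α(-K t^α) for t ≥ 0, where E_α is the Mittag-Leffler function; moreover E_α(-K t^α) > 0 for all t ≥ 0 when 0 < α ≤ 1 and K ≥ 0, hence S_p(t) > 0 whenever S_p(0) > 0. -/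
/-- The Mittag-Leffler function `E_α(z) = ∑ z^k / Γ(1 + α k)`. -/
noncomputable def mittagLeffler (α z : ℝ) : ℝ :=
  ∑' k : ℕ, z ^ k / Real.Gamma (1 + α * k)


open Real MeasureTheory intervalIntegral Set

set_option maxHeartbeats 1000000 in
lemma ML_summable {α : ℝ} (hα : 0 < α) {R : ℝ} (hR : 0 ≤ R) :
    Summable (fun k : ℕ => R ^ (α * k) / Real.Gamma (1 + α * k)) := by
  set r : ℝ := R ^ α with hr
  have hr0 : 0 ≤ r := Real.rpow_nonneg hR α
  set C : ℝ := (2 * r + 1) ^ α⁻¹ with hC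
  have hC1 : 1 ≤ C := Real.one_le_rpow (by linarith) (by positivity)
  have hCα : C ^ α = 2 * r + 1 := Real.rpow_inv_rpow (by linarith) hα.ne'
  have hC0 : 0 < C := lt_of_lt_of_le one_pos hC1
  set k₀ : ℕ := ⌈α⁻¹⌉₊ with hk₀
  have key : ∀ m : ℕ, 1 ≤ α * m →
      R ^ (α * m) / Real.Gamma (1 + α * m) ≤ Real.exp C * C * (1/2) ^ m := by
    intro m hm
    have hGpos : 0 < Real.Gamma (1 + α * m) := Real.Gamma_pos_of_pos (by positivity)
    set n : ℕ := ⌊α * m⌋₊ with hn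
    have hn1 : 1 ≤ n := Nat.le_floor (by exact_mod_cast hm)
    have hfl : (n : ℝ) ≤ α * m := Nat.floor_le (by positivity)
    have hfl2 : α * m - 1 ≤ n := by
      have := Nat.lt_floor_add_one (α * m); linarith
    have hmono : ((Nat.factorial n : ℕ) : ℝ) ≤ Real.Gamma (1 + α * m) := by
      have h1 : ((n : ℝ) + 1) ∈ Set.Ici (2:ℝ) := by
        simp only [Set.mem_Ici]
        have : (1:ℝ) ≤ (n:ℝ) := by exact_mod_cast hn1
        linarith
      have h2 : (1 + α * m) ∈ Set.Ici (2:ℝ) := by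
        simp only [Set.mem_Ici]; linarith
      have := Real.Gamma_strictMonoOn_Ici.monotoneOn h1 h2 (by linarith)
      rwa [Real.Gamma_nat_eq_factorial] at this
    have hfacpos : (0:ℝ) < (Nat.factorial n : ℕ) := by exact_mod_cast Nat.factorial_pos n
    have hfac : C ^ ((n:ℕ):ℝ) / Real.exp C ≤ ((Nat.factorial n : ℕ) : ℝ) := by
      rw [Real.rpow_natCast, div_le_iff₀ (Real.exp_pos C)]
      have h := Real.pow_div_factorial_le_exp C hC0.le n
      rw [div_le_iff₀ hfacpos] at h
      linarith
    have hCn : C ^ (α * m - 1) ≤ C ^ ((n:ℕ):ℝ) :=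
      Real.rpow_le_rpow_of_exponent_le hC1 hfl2
    have hGam_lb : C ^ (α * m - 1) / Real.exp C ≤ Real.Gamma (1 + α * m) := by
      refine le_trans (le_trans ?_ hfac) hmono
      gcongr
    have hRm : R ^ (α * m) = r ^ m := by
      rw [hr, ← Real.rpow_natCast (R ^ α) m, ← Real.rpow_mul hR]
    have hCam : C ^ (α * (m:ℕ)) = (2*r+1) ^ m := by
      rw [Real.rpow_mul hC0.le, hCα, Real.rpow_natCast]
    have hCam1 : C ^ (α * m - 1) = (2*r+1) ^ m / C := by
      rw [Real.rpow_sub hC0, Real.rpow_one, hCam]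
    have hq : r / (2*r+1) ≤ 1/2 := by
      rw [div_le_div_iff₀ (by linarith) (by norm_num)]; linarith
    have hlb_pos : 0 < C ^ (α * m - 1) / Real.exp C := by positivity
    calc R ^ (α * m) / Real.Gamma (1 + α * m)
        ≤ r ^ m / (C ^ (α * m - 1) / Real.exp C) := by
          rw [hRm]; gcongr
      _ = Real.exp C * C * (r ^ m / (2*r+1) ^ m) := by
          rw [hCam1]; field_simp
      _ ≤ Real.exp C * C * (1/2) ^ m := by
          have h2 : r ^ m / (2*r+1) ^ m ≤ (1/2:ℝ) ^ m := by
            rw [← div_pow]; exact pow_le_pow_left₀ (by positivity) hq m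
          exact mul_le_mul_of_nonneg_left h2 (by positivity)
  -- conclude summability
  have hshift : Summable (fun k : ℕ => R ^ (α * ((k + k₀ : ℕ) : ℝ)) / Real.Gamma (1 + α * ((k + k₀ : ℕ) : ℝ))) := by
    have hgeo : Summable (fun k : ℕ => (Real.exp C * C) * (1/2) ^ k) :=
      (summable_geometric_of_lt_one (by norm_num) (by norm_num)).mul_left _
    refine Summable.of_nonneg_of_le (fun k => by positivity) (fun k => ?_) hgeo
    have h1 : 1 ≤ α * ((k + k₀ : ℕ) : ℝ) := by
      have hceil : α⁻¹ ≤ (k₀ : ℝ) := Nat.le_ceil _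
      have : (k₀ : ℝ) ≤ ((k + k₀ : ℕ) : ℝ) := by push_cast; linarith [Nat.cast_nonneg (α := ℝ) k]
      calc (1:ℝ) = α * α⁻¹ := by field_simp
        _ ≤ α * k₀ := by gcongr
        _ ≤ _ := by gcongr
    calc R ^ (α * ((k + k₀ : ℕ):ℝ)) / Real.Gamma (1 + α * ((k + k₀:ℕ):ℝ))
        ≤ Real.exp C * C * (1/2) ^ (k + k₀) := key _ h1
      _ ≤ Real.exp C * C * (1/2) ^ k :=
          mul_le_mul_of_nonneg_left
            (pow_le_pow_of_le_one (by norm_num) (by norm_num) (Nat.le_add_right k k₀))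
            (by positivity)
  exact (summable_nat_add_iff k₀).mp hshift

lemma beta_rpow {a b : ℝ} (ha : 0 < a) (hb : 0 < b) {t : ℝ} (ht : 0 < t) :
    ∫ s in (0:ℝ)..t, s ^ (a - 1) * (t - s) ^ (b - 1)
      = Real.Gamma a * Real.Gamma b / Real.Gamma (a + b) * t ^ (a + b - 1) := by
  have hab : (0:ℝ) < a + b := by linarith
  have hΓab : Real.Gamma (a + b) ≠ 0 := (Real.Gamma_pos_of_pos hab).ne'
  have hc : ∫ s in (0:ℝ)..t, ((s:ℂ) ^ ((a:ℂ) - 1) * ((t:ℂ) - s) ^ ((b:ℂ) - 1)) =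
      (t:ℂ) ^ ((a:ℂ) + b - 1) * Complex.betaIntegral a b :=
    Complex.betaIntegral_scaled a b ht
  have hbeta : Complex.Gamma a * Complex.Gamma b
      = Complex.Gamma ((a:ℂ) + b) * Complex.betaIntegral a b :=
    Complex.Gamma_mul_Gamma_eq_betaIntegral (by simpa using ha) (by simpa using hb)
  have heq : ∫ s in (0:ℝ)..t, ((s:ℂ) ^ ((a:ℂ) - 1) * ((t:ℂ) - s) ^ ((b:ℂ) - 1)) =
      ((∫ s in (0:ℝ)..t, s ^ (a - 1) * (t - s) ^ (b - 1) : ℝ) : ℂ) := by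
    refine Eq.trans (intervalIntegral.integral_congr
      (g := fun s : ℝ => ((s ^ (a-1) * (t-s) ^ (b-1) : ℝ) : ℂ)) ?_) ?_
    · intro s hs
      rw [Set.uIcc_of_le ht.le] at hs
      beta_reduce
      rw [(by push_cast; ring : ((a:ℂ) - 1) = ((a-1:ℝ):ℂ)),
        (by push_cast; ring : ((b:ℂ) - 1) = ((b-1:ℝ):ℂ)),
        (by push_cast; ring : ((t:ℂ) - (s:ℂ)) = ((t - s : ℝ):ℂ)),
        ← Complex.ofReal_cpow hs.1,
        ← Complex.ofReal_cpow (by linarith [hs.2] : (0:ℝ) ≤ t - s)]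
      norm_cast
    · exact RCLike.intervalIntegral_ofReal
  rw [heq] at hc
  have hβ : Complex.betaIntegral a b =
      ((Real.Gamma a * Real.Gamma b / Real.Gamma (a+b) : ℝ) : ℂ) := by
    have h1 : Complex.Gamma ((a:ℂ)+b) = ((Real.Gamma (a+b) : ℝ) : ℂ) := by
      rw [(by push_cast; ring : ((a:ℂ)+b) = ((a+b : ℝ) : ℂ)), Complex.Gamma_ofReal]
    have h2 := hbeta
    rw [h1, Complex.Gamma_ofReal, Complex.Gamma_ofReal] at h2
    have h3 : ((Real.Gamma (a+b) :ℝ) : ℂ) ≠ 0 := by exact_mod_cast hΓab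
    have h4 : Complex.betaIntegral a b
        = ((Real.Gamma a : ℂ) * (Real.Gamma b : ℂ)) / (Real.Gamma (a+b) : ℂ) := by
      rw [eq_div_iff h3, mul_comm]
      exact h2.symm
    rw [h4]
    push_cast
    ring
  rw [hβ, (by push_cast; ring : ((a:ℂ) + b - 1) = ((a + b - 1 : ℝ) : ℂ)),
    ← Complex.ofReal_cpow ht.le] at hc
  have hfin : ((∫ s in (0:ℝ)..t, s ^ (a - 1) * (t - s) ^ (b - 1) : ℝ) : ℂ)
      = ((Real.Gamma a * Real.Gamma b / Real.Gamma (a+b) * t ^ (a+b-1) : ℝ) : ℂ) := by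
    rw [hc]; push_cast; ring
  exact_mod_cast hfin

noncomputable def MLaux (α t : ℝ) : ℝ :=
  ∑' k : ℕ, (-1)^k * |t| ^ (α * k) / Real.Gamma (1 + α * k)

lemma Gamma_term_pos {α : ℝ} (hα : 0 < α) (k : ℕ) : 0 < Real.Gamma (1 + α * k) :=
  Real.Gamma_pos_of_pos (by positivity)

lemma MLaux_term_abs {α : ℝ} (hα : 0 < α) (t : ℝ) (k : ℕ) :
    |(-1)^k * |t| ^ (α * k) / Real.Gamma (1 + α * k)|
      = |t| ^ (α * k) / Real.Gamma (1 + α * k) := by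
  rw [abs_div, abs_mul, abs_pow, abs_neg, abs_one, one_pow, one_mul,
    abs_of_nonneg (Real.rpow_nonneg (abs_nonneg t) _),
    abs_of_pos (Gamma_term_pos hα k)]

lemma MLaux_summable {α : ℝ} (hα : 0 < α) (t : ℝ) :
    Summable (fun k : ℕ => (-1)^k * |t| ^ (α * k) / Real.Gamma (1 + α * k)) := by
  refine Summable.of_abs ?_
  have := ML_summable hα (abs_nonneg t)
  simpa only [MLaux_term_abs hα t] using this

lemma MLaux_zero {α : ℝ} (hα : 0 < α) : MLaux α 0 = 1 := by
  unfold MLaux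
  rw [tsum_eq_single 0]
  · norm_num [Real.Gamma_one]
  · intro k hk
    have hk' : (0:ℝ) < α * k := by
      have : (1:ℝ) ≤ (k:ℝ) := by exact_mod_cast Nat.one_le_iff_ne_zero.mpr hk
      nlinarith
    rw [abs_zero, Real.zero_rpow hk'.ne']
    simp

lemma MLaux_contOn {α : ℝ} (hα : 0 < α) (b : ℝ) (hb : 0 ≤ b) :
    ContinuousOn (MLaux α) (Set.Icc (-b) b) := by
  unfold MLaux
  refine continuousOn_tsum (f := fun (k : ℕ) (t : ℝ) =>
      (-1)^k * |t| ^ (α * k) / Real.Gamma (1 + α * k))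
    (u := fun k : ℕ => b ^ (α * k) / Real.Gamma (1 + α * k)) ?_ (ML_summable hα hb) ?_
  · intro k
    have hc : Continuous fun t : ℝ => |t| ^ (α * (k:ℕ)) := by
      refine continuous_iff_continuousAt.mpr fun x => ?_
      exact (Real.continuousAt_rpow_const _ _ (Or.inr (by positivity))).comp
        continuous_abs.continuousAt
    exact ((continuous_const.mul hc).div_const _).continuousOn
  · intro k t ht
    rw [Real.norm_eq_abs, MLaux_term_abs hα]
    have hab : |t| ≤ b := abs_le.mpr ⟨ht.1, ht.2⟩
    exact div_le_div_of_nonneg_right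
      (Real.rpow_le_rpow (abs_nonneg t) hab (by positivity)) (Gamma_term_pos hα k).le

lemma term_cont {α : ℝ} (hα : 0 < α) (k : ℕ) :
    Continuous (fun s : ℝ => (-1)^k * |s| ^ (α * k) / Real.Gamma (1 + α * k)) := by
  have hc : Continuous fun s : ℝ => |s| ^ (α * (k:ℕ)) := by
    refine continuous_iff_continuousAt.mpr fun x => ?_
    exact (Real.continuousAt_rpow_const _ _ (Or.inr (by positivity))).comp
      continuous_abs.continuousAt
  exact (continuous_const.mul hc).div_const _

lemma II_kernel {α : ℝ} (hα : 0 < α) (c u v : ℝ) :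
    IntervalIntegrable (fun s : ℝ => (c - s) ^ (α - 1)) volume u v := by
  have h := intervalIntegral.intervalIntegrable_rpow' (a := c - u) (b := c - v)
    (r := α - 1) (by linarith)
  simpa using h.comp_sub_left c

lemma ML_inteq {α : ℝ} (hα : 0 < α) {t : ℝ} (ht : 0 ≤ t) :
    ∫ s in (0:ℝ)..t, (t - s) ^ (α - 1) * MLaux α s
      = Real.Gamma α * (1 - MLaux α t) := by
  rcases eq_or_lt_of_le ht with rfl|ht
  · simp [MLaux_zero hα]
  have hΓ : ∀ k : ℕ, (0:ℝ) < Real.Gamma (1 + α * k) := Gamma_term_pos hα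
  set F : ℕ → ℝ → ℝ := fun k s =>
    (t - s) ^ (α - 1) * ((-1)^k * |s| ^ (α * k) / Real.Gamma (1 + α * k)) with hF
  have hpt : ∀ s : ℝ, (t - s) ^ (α - 1) * MLaux α s = ∑' k, F k s := by
    intro s; unfold MLaux; rw [tsum_mul_left]
  have hFii : ∀ k, IntervalIntegrable (F k) volume 0 t := fun k =>
    (II_kernel hα t 0 t).mul_continuousOn (term_cont hα k).continuousOn
  have hFint : ∀ k, Integrable (F k) (volume.restrict (Ioc 0 t)) := fun k =>
    (intervalIntegrable_iff_integrableOn_Ioc_of_le ht.le).mp (hFii k)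
  -- value of each term integral
  have hFval : ∀ k : ℕ, ∫ s in (0:ℝ)..t, F k s
      = Real.Gamma α * ((-1)^k * t ^ (α * ((k:ℝ)+1)) / Real.Gamma (1 + α * ((k:ℝ)+1))) := by
    intro k
    have h1 : ∫ s in (0:ℝ)..t, F k s
        = ((-1)^k / Real.Gamma (1 + α * k)) *
          ∫ s in (0:ℝ)..t, s ^ (α * k + 1 - 1) * (t - s) ^ (α - 1) := by
      rw [← intervalIntegral.integral_const_mul]
      refine intervalIntegral.integral_congr fun s hs => ?_
      rw [Set.uIcc_of_le ht.le] at hs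
      rw [hF]
      beta_reduce
      rw [abs_of_nonneg hs.1]
      have : α * (k:ℝ) + 1 - 1 = α * k := by ring
      rw [this]
      ring
    rw [h1, beta_rpow (by positivity) hα ht]
    have e1 : Real.Gamma (α * k + 1) = Real.Gamma (1 + α * k) := by ring_nf
    have e2 : Real.Gamma (α * k + 1 + α) = Real.Gamma (1 + α * ((k:ℝ)+1)) := by ring_nf
    have e3 : t ^ (α * k + 1 + α - 1) = t ^ (α * ((k:ℝ)+1)) := by ring_nf
    rw [e1, e2, e3]
    have h2 := (hΓ k).ne'
    have h3 : Real.Gamma (1 + α * ((k:ℝ)+1)) ≠ 0 := by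
      have : (0:ℝ) < 1 + α * ((k:ℝ)+1) := by positivity
      exact (Real.Gamma_pos_of_pos this).ne'
    field_simp
  -- summability of norms of integrals
  set I₀ : ℝ := ∫ s in Ioc (0:ℝ) t, (t - s) ^ (α - 1) with hI₀
  have hKint : IntegrableOn (fun s : ℝ => (t - s) ^ (α - 1)) (Ioc 0 t) volume :=
    (intervalIntegrable_iff_integrableOn_Ioc_of_le ht.le).mp (II_kernel hα t 0 t)
  have hnorm_le : ∀ k : ℕ, (∫ s in Ioc (0:ℝ) t, ‖F k s‖)
      ≤ I₀ * (t ^ (α * k) / Real.Gamma (1 + α * k)) := by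
    intro k
    have hmaj : IntegrableOn
        (fun s : ℝ => (t - s) ^ (α - 1) * (t ^ (α * k) / Real.Gamma (1 + α * k)))
        (Ioc 0 t) volume := hKint.mul_const _
    have hbd : ∀ᵐ s ∂(volume.restrict (Ioc (0:ℝ) t)),
        ‖F k s‖ ≤ (t - s) ^ (α - 1) * (t ^ (α * k) / Real.Gamma (1 + α * k)) := by
      refine (ae_restrict_iff' measurableSet_Ioc).mpr (Filter.Eventually.of_forall ?_)
      intro s hs
      have hts : (0:ℝ) ≤ t - s := by linarith [hs.2]
      have hker : (0:ℝ) ≤ (t - s) ^ (α - 1) := Real.rpow_nonneg hts _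
      rw [hF]
      beta_reduce
      rw [norm_mul, Real.norm_eq_abs, Real.norm_eq_abs, abs_of_nonneg hker,
        MLaux_term_abs hα]
      have habs : |s| ≤ t := by
        rw [abs_of_nonneg hs.1.le]; exact hs.2
      refine mul_le_mul_of_nonneg_left ?_ hker
      exact div_le_div_of_nonneg_right
        (Real.rpow_le_rpow (abs_nonneg s) habs (by positivity)) (hΓ k).le
    calc (∫ s in Ioc (0:ℝ) t, ‖F k s‖)
        ≤ ∫ s in Ioc (0:ℝ) t, (t - s) ^ (α - 1) * (t ^ (α * k) / Real.Gamma (1 + α * k)) :=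
          integral_mono_ae (hFint k).norm hmaj hbd
      _ = I₀ * (t ^ (α * k) / Real.Gamma (1 + α * k)) := by
          rw [hI₀, ← MeasureTheory.integral_mul_const]
  have hnorm_sum : Summable (fun k : ℕ => ∫ s in Ioc (0:ℝ) t, ‖F k s‖) := by
    refine Summable.of_nonneg_of_le
      (fun k => integral_nonneg fun s => norm_nonneg _) hnorm_le ?_
    exact (ML_summable hα ht.le).mul_left I₀
  have hinter := integral_tsum_of_summable_integral_norm hFint hnorm_sum
  -- the shifted sum identity
  have hz := Summable.tsum_eq_zero_add (MLaux_summable hα t)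
  have hterm0 : ((-1:ℝ))^(0:ℕ) * |t| ^ (α * ((0:ℕ):ℝ)) / Real.Gamma (1 + α * ((0:ℕ):ℝ)) = 1 := by
    simp [Real.Gamma_one]
  rw [hterm0] at hz
  have hshift : (∑' k : ℕ, (-1:ℝ)^k * t ^ (α * ((k:ℝ)+1)) / Real.Gamma (1 + α * ((k:ℝ)+1)))
      = 1 - MLaux α t := by
    have h4 : ∀ k : ℕ, (-1:ℝ)^k * t ^ (α * ((k:ℝ)+1)) / Real.Gamma (1 + α * ((k:ℝ)+1))
        = -((-1)^(k+1) * |t| ^ (α * (((k+1:ℕ)):ℝ)) / Real.Gamma (1 + α * (((k+1:ℕ)):ℝ))) := by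
      intro k
      rw [abs_of_pos ht]
      push_cast
      rw [pow_succ]
      ring
    calc (∑' k : ℕ, (-1:ℝ)^k * t ^ (α * ((k:ℝ)+1)) / Real.Gamma (1 + α * ((k:ℝ)+1)))
        = ∑' k : ℕ, -((-1:ℝ)^(k+1) * |t| ^ (α * (((k+1:ℕ)):ℝ))
            / Real.Gamma (1 + α * (((k+1:ℕ)):ℝ))) := tsum_congr h4
      _ = -(∑' k : ℕ, (-1:ℝ)^(k+1) * |t| ^ (α * (((k+1:ℕ)):ℝ))
            / Real.Gamma (1 + α * (((k+1:ℕ)):ℝ))) := tsum_neg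
      _ = 1 - MLaux α t := by
          have : (∑' k : ℕ, (-1:ℝ)^(k+1) * |t| ^ (α * (((k+1:ℕ)):ℝ))
            / Real.Gamma (1 + α * (((k+1:ℕ)):ℝ))) = MLaux α t - 1 := by
            unfold MLaux
            linarith [hz]
          rw [this]; ring
  calc ∫ s in (0:ℝ)..t, (t - s) ^ (α - 1) * MLaux α s
      = ∫ s in (0:ℝ)..t, ∑' k, F k s :=
        intervalIntegral.integral_congr fun s _ => hpt s
    _ = ∫ s in Ioc (0:ℝ) t, ∑' k, F k s := intervalIntegral.integral_of_le ht.le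
    _ = ∑' k, ∫ s in Ioc (0:ℝ) t, F k s := hinter.symm
    _ = ∑' k, ∫ s in (0:ℝ)..t, F k s := by
        refine tsum_congr fun k => ?_
        rw [intervalIntegral.integral_of_le ht.le]
    _ = ∑' k : ℕ, Real.Gamma α *
          ((-1)^k * t ^ (α * ((k:ℝ)+1)) / Real.Gamma (1 + α * ((k:ℝ)+1))) :=
        tsum_congr fun k => hFval k
    _ = Real.Gamma α * ∑' k : ℕ,
          (-1:ℝ)^k * t ^ (α * ((k:ℝ)+1)) / Real.Gamma (1 + α * ((k:ℝ)+1)) := tsum_mul_left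
    _ = Real.Gamma α * (1 - MLaux α t) := by rw [hshift]

lemma II_kernel_mul {α : ℝ} (hα : 0 < α) {c u v : ℝ} (h0u : 0 ≤ u) (huv : u ≤ v) :
    IntervalIntegrable (fun s => (c - s) ^ (α - 1) * MLaux α s) volume u v := by
  refine (II_kernel hα c u v).mul_continuousOn ?_
  have hv : 0 ≤ v := le_trans h0u huv
  refine (MLaux_contOn hα v hv).mono ?_
  rw [Set.uIcc_of_le huv]
  intro x hx
  exact ⟨by linarith [hx.1], hx.2⟩

lemma MLaux_pos {α : ℝ} (hα : 0 < α) (hα1 : α ≤ 1) {t : ℝ} (ht : 0 ≤ t) :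
    0 < MLaux α t := by
  by_contra hcon
  push_neg at hcon
  set f := MLaux α with hf
  have hΓα : 0 < Real.Gamma α := Real.Gamma_pos_of_pos hα
  have hT0 : 0 < t := by
    rcases eq_or_lt_of_le ht with rfl|h
    · rw [hf, MLaux_zero hα] at hcon; linarith
    · exact h
  have hcont : ContinuousOn f (Icc 0 t) :=
    (MLaux_contOn hα t ht).mono (fun x hx => ⟨by linarith [hx.1], hx.2⟩)
  set S : Set ℝ := Icc 0 t ∩ f ⁻¹' (Iic 0) with hS
  have hSclosed : IsClosed S :=
    hcont.preimage_isClosed_of_isClosed isClosed_Icc isClosed_Iic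
  have hSne : S.Nonempty := ⟨t, ⟨ht, le_refl t⟩, hcon⟩
  have hSbdd : BddBelow S := ⟨0, fun x hx => hx.1.1⟩
  set t₀ : ℝ := sInf S with ht₀def
  have ht₀S : t₀ ∈ S := hSclosed.csInf_mem hSne hSbdd
  have ht₀mem : t₀ ∈ Icc 0 t := ht₀S.1
  have hf_t₀ : f t₀ ≤ 0 := ht₀S.2
  have ht₀pos : 0 < t₀ := by
    rcases eq_or_lt_of_le ht₀mem.1 with h|h
    · rw [hf, ← h, MLaux_zero hα] at hf_t₀; linarith
    · exact h
  have hpos_lt : ∀ s, 0 ≤ s → s < t₀ → 0 < f s := by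
    intro s hs0 hst
    by_contra h
    push_neg at h
    have hmem : s ∈ S := ⟨⟨hs0, le_trans hst.le ht₀mem.2⟩, h⟩
    have := csInf_le hSbdd hmem
    rw [← ht₀def] at this
    linarith
  have hft₀0 : f t₀ = 0 := by
    refine le_antisymm hf_t₀ ?_
    have hcw : ContinuousWithinAt f (Ico 0 t₀) t₀ :=
      (hcont t₀ ht₀mem).mono (fun x hx => ⟨hx.1, le_trans hx.2.le ht₀mem.2⟩)
    have hne : (nhdsWithin t₀ (Ico (0:ℝ) t₀)).NeBot := by
      rw [← mem_closure_iff_nhdsWithin_neBot, closure_Ico ht₀pos.ne]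
      exact ⟨ht₀pos.le, le_refl t₀⟩
    refine ge_of_tendsto hcw ?_
    filter_upwards [eventually_mem_nhdsWithin] with s hs
    exact (hpos_lt s hs.1 hs.2).le
  -- key inequality
  have hkey : ∀ u, 0 ≤ u → u < t₀ →
      Real.Gamma α * f u ≤ ∫ s in u..t₀, (t₀ - s) ^ (α - 1) * f s := by
    intro u hu0 hu
    have e0 : ∫ s in (0:ℝ)..u, (u - s) ^ (α - 1) * f s = Real.Gamma α * (1 - f u) :=
      ML_inteq hα hu0
    have e1 : ∫ s in (0:ℝ)..t₀, (t₀ - s) ^ (α - 1) * f s = Real.Gamma α := by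
      rw [hf, ML_inteq hα ht₀pos.le, ← hf, hft₀0]; ring
    have hsplit : ∫ s in (0:ℝ)..t₀, (t₀ - s) ^ (α - 1) * f s
        = (∫ s in (0:ℝ)..u, (t₀ - s) ^ (α - 1) * f s)
          + ∫ s in u..t₀, (t₀ - s) ^ (α - 1) * f s :=
      (intervalIntegral.integral_add_adjacent_intervals
        (II_kernel_mul hα (le_refl 0) hu0)
        (II_kernel_mul hα hu0 hu.le)).symm
    have hne_u : ∀ᵐ s : ℝ ∂volume, s ≠ u := by
      refine ae_iff.mpr ?_
      have : {s : ℝ | ¬ s ≠ u} = {u} := by ext s; simp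
      rw [this]
      exact Real.volume_singleton
    have hcomp : (∫ s in (0:ℝ)..u, (t₀ - s) ^ (α - 1) * f s)
        ≤ ∫ s in (0:ℝ)..u, (u - s) ^ (α - 1) * f s := by
      refine intervalIntegral.integral_mono_ae_restrict hu0
        (II_kernel_mul hα (le_refl 0) hu0) (II_kernel_mul hα (le_refl 0) hu0) ?_
      have hmem : ∀ᵐ s ∂volume.restrict (Icc (0:ℝ) u), s ∈ Icc (0:ℝ) u :=
        ae_restrict_mem measurableSet_Icc
      filter_upwards [hmem, ae_restrict_of_ae hne_u] with s hs hsne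
      have hsu : s < u := lt_of_le_of_ne hs.2 hsne
      have hfs : 0 ≤ f s := (hpos_lt s hs.1 (lt_trans hsu hu)).le
      have hker : (t₀ - s) ^ (α - 1) ≤ (u - s) ^ (α - 1) :=
        Real.rpow_le_rpow_of_nonpos (by linarith) (by linarith) (by linarith)
      exact mul_le_mul_of_nonneg_right hker hfs
    have := e1 ▸ hsplit
    rw [e0] at hcomp
    linarith
  -- choose ε and the max point
  set ε : ℝ := min t₀ ((α * Real.Gamma α / 2) ^ α⁻¹) with hε
  have hε0 : 0 < ε := lt_min ht₀pos (Real.rpow_pos_of_pos (by positivity) _)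
  have hεt₀ : ε ≤ t₀ := min_le_left _ _
  have hεα : ε ^ α < α * Real.Gamma α := by
    have h1 : ε ^ α ≤ ((α * Real.Gamma α / 2) ^ α⁻¹) ^ α :=
      Real.rpow_le_rpow hε0.le (min_le_right _ _) hα.le
    rw [Real.rpow_inv_rpow (by positivity) hα.ne'] at h1
    nlinarith [hΓα, hα]
  set t₁ : ℝ := t₀ - ε with ht₁def
  have ht₁0 : 0 ≤ t₁ := by simp only [ht₁def]; linarith
  have ht₁lt : t₁ < t₀ := by simp only [ht₁def]; linarith
  obtain ⟨u, huIcc, humax⟩ := (isCompact_Icc (a := t₁) (b := t₀)).exists_isMaxOn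
    (Set.nonempty_Icc.mpr ht₁lt.le)
    (hcont.mono (fun x hx => ⟨le_trans ht₁0 hx.1, le_trans hx.2 ht₀mem.2⟩))
  have hfu_pos : 0 < f u :=
    lt_of_lt_of_le (hpos_lt t₁ ht₁0 ht₁lt) (humax (Set.left_mem_Icc.mpr ht₁lt.le))
  have hu_lt : u < t₀ := by
    rcases lt_or_eq_of_le huIcc.2 with h|h
    · exact h
    · rw [h, hft₀0] at hfu_pos; linarith
  have hu0 : 0 ≤ u := le_trans ht₁0 huIcc.1
  -- bound the tail integral
  have hb1 : ∫ s in u..t₀, (t₀ - s) ^ (α - 1) * f s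
      ≤ ∫ s in u..t₀, (t₀ - s) ^ (α - 1) * f u := by
    refine intervalIntegral.integral_mono_on hu_lt.le
      (II_kernel_mul hα hu0 hu_lt.le) ((II_kernel hα t₀ u t₀).mul_const _) ?_
    intro s hs
    have hker : (0:ℝ) ≤ (t₀ - s) ^ (α - 1) := Real.rpow_nonneg (by linarith [hs.2]) _
    exact mul_le_mul_of_nonneg_left (humax ⟨le_trans huIcc.1 hs.1, hs.2⟩) hker
  have hIval : ∫ s in u..t₀, (t₀ - s) ^ (α - 1) = (t₀ - u) ^ α / α := by
    have h := intervalIntegral.integral_comp_sub_left (a := u) (b := t₀)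
      (fun x : ℝ => x ^ (α - 1)) t₀
    rw [h, sub_self, integral_rpow (Or.inl (by linarith)),
      Real.zero_rpow (by linarith : α - 1 + 1 ≠ 0)]
    rw [(by ring : α - 1 + 1 = α)]
    ring
  have hb2 : ∫ s in u..t₀, (t₀ - s) ^ (α - 1) * f u = (t₀ - u) ^ α / α * f u := by
    rw [intervalIntegral.integral_mul_const, hIval]
  have h5 : (t₀ - u) ^ α ≤ ε ^ α :=
    Real.rpow_le_rpow (by linarith) (by linarith [huIcc.1]) hα.le
  have hfinal : Real.Gamma α * f u < Real.Gamma α * f u := by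
    calc Real.Gamma α * f u
        ≤ ∫ s in u..t₀, (t₀ - s) ^ (α - 1) * f s := hkey u hu0 hu_lt
      _ ≤ (t₀ - u) ^ α / α * f u := by rw [← hb2]; exact hb1
      _ ≤ ε ^ α / α * f u := by
          apply mul_le_mul_of_nonneg_right _ hfu_pos.le
          exact div_le_div_of_nonneg_right h5 hα.le
      _ < Real.Gamma α * f u := by
          apply mul_lt_mul_of_pos_right _ hfu_pos
          rw [div_lt_iff₀ hα]
          calc ε ^ α < α * Real.Gamma α := hεα
            _ = Real.Gamma α * α := by ring
  exact lt_irrefl _ hfinal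
lemma mittagLeffler_eq {α : ℝ} (hα : 0 < α) {x : ℝ} (hx : 0 ≤ x) :
    mittagLeffler α (-x) = MLaux α (x ^ α⁻¹) := by
  unfold mittagLeffler MLaux
  refine tsum_congr fun k => ?_
  have hy : (0:ℝ) ≤ x ^ α⁻¹ := Real.rpow_nonneg hx _
  rw [abs_of_nonneg hy, Real.rpow_mul hy, Real.rpow_inv_rpow hx hα.ne',
    Real.rpow_natCast, neg_pow]

theorem stmt_17 (α K : ℝ) (hα0 : 0 < α) (hα1 : α ≤ 1) (hK : 0 ≤ K)
    (Sp : ℝ → ℝ)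
    (hSp : ∀ t, 0 ≤ t → Sp t ≥ Sp 0 * mittagLeffler α (-K * t ^ α))
    (h0 : 0 < Sp 0) :
    (∀ t, 0 ≤ t → 0 < mittagLeffler α (-K * t ^ α)) ∧
    (∀ t, 0 ≤ t → 0 < Sp t) := by
  have hpos : ∀ t, 0 ≤ t → 0 < mittagLeffler α (-K * t ^ α) := by
    intro t htt
    have hx : 0 ≤ K * t ^ α := mul_nonneg hK (Real.rpow_nonneg htt α)
    rw [(by ring : -K * t ^ α = -(K * t ^ α)), mittagLeffler_eq hα0 hx]
    exact MLaux_pos hα0 hα1 (Real.rpow_nonneg hx _)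
  refine ⟨hpos, fun t htt => ?_⟩
  have h1 := hSp t htt
  have h2 := hpos t htt
  nlinarith
end
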